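/- Let Ω be a finite set, let π be a strictly positive probability vector on Ω, and let p be a transition rate kernel on Ω reversible with respect to π whose underlying graph is connected; let c(x,y) = π(x)·p(x,y) for x ≠ y and let E denote the associated Dirichlet form and W_{c,2} the associated flux-formulation Wasserstein distance. Suppose p satisfies the modified log-Sobolev inequality Ent_π[f] ≤ C_MLSI · E(log f, f) for all strictly positive f : Ω → ℝ. Then for every probability vector μ on Ω, W_{c,2}(μ, π)² ≤ 4·C_MLSI · (max_{x∈Ω} μ(x)/π(x)) · KL(μ ‖ π), where KL(μ ‖ π) = Σ_{x : μ(x)>0} μ(x)·log(μ(x)/π(x)). -/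

import Mathlib

open Finset

/-- The underlying graph of a transition rate kernel `p`. -/
def kernelGraph {Ω : Type*} (p : Ω → Ω → ℝ) : SimpleGraph Ω where
  Adj x y := x ≠ y ∧ (0 < p x y ∨ 0 < p y x)
  symm := ⟨fun x y h => ⟨h.1.symm, h.2.symm⟩⟩
  loopless := ⟨fun x h => h.1 rfl⟩

/-- The discrete Wasserstein-2 distance associated with a fixed capacity `c`,
in the dual flux formulation. -/
noncomputable def Wc2 {Ω : Type*} [Fintype Ω] (c : Ω → Ω → ℝ) (μ ν : Ω → ℝ) : ℝ :=
  Real.sqrt (sInf {v : ℝ | ∃ J : Ω → Ω → ℝ,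
    (∀ x y, J x y = - J y x) ∧
    (∀ x y, c x y = 0 → J x y = 0) ∧
    (∀ x, (ν x - μ x) + ∑ y, J x y = 0) ∧
    v = (1 / 2) * ∑ x, ∑ y, if 0 < c x y then J x y ^ 2 / c x y else 0})


/-- Monotone helper: `F a ≤ F b` if the derivative is nonneg on `[a,b]`. -/
lemma te_mono_Icc {F F' : ℝ → ℝ} {a b : ℝ} (hab : a ≤ b)
    (hF : ∀ x ∈ Set.Icc a b, HasDerivAt F (F' x) x)
    (h' : ∀ x ∈ Set.Icc a b, 0 ≤ F' x) : F a ≤ F b := by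
  have hmono : MonotoneOn F (Set.Icc a b) := by
    apply monotoneOn_of_deriv_nonneg (convex_Icc a b)
    · exact fun x hx => (hF x hx).continuousAt.continuousWithinAt
    · intro x hx
      rw [interior_Icc] at hx
      exact ((hF x (Set.Ioo_subset_Icc_self hx)).differentiableAt).differentiableWithinAt
    · intro x hx
      rw [interior_Icc] at hx
      rw [(hF x (Set.Ioo_subset_Icc_self hx)).deriv]
      exact h' x (Set.Ioo_subset_Icc_self hx)
  exact hmono (Set.left_mem_Icc.2 hab) (Set.right_mem_Icc.2 hab) hab

lemma te_anti_Icc {F F' : ℝ → ℝ} {a b : ℝ} (hab : a ≤ b)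
    (hF : ∀ x ∈ Set.Icc a b, HasDerivAt F (F' x) x)
    (h' : ∀ x ∈ Set.Icc a b, F' x ≤ 0) : F b ≤ F a := by
  have := te_mono_Icc (F := fun x => -F x) (F' := fun x => -F' x) hab
    (fun x hx => (hF x hx).neg) (fun x hx => by simpa using h' x hx)
  simp only [neg_le_neg_iff] at this
  linarith [this]

/-- `log (1+u) ≥ u - u²/2` for `u ≥ 0`. -/
lemma te_log_lb {u : ℝ} (hu : 0 ≤ u) : u - u^2/2 ≤ Real.log (1+u) := by
  have h := te_mono_Icc (a := 0) (b := u)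
    (F := fun x => Real.log (1+x) - x + x^2/2)
    (F' := fun x => 1/(1+x) - 1 + x) hu
    (fun x hx => by
      have hx0 : (0:ℝ) < 1 + x := by nlinarith [hx.1]
      have h1 : HasDerivAt (fun x : ℝ => 1 + x) 1 x := by
        simpa using (hasDerivAt_id x).const_add 1
      have hlog : HasDerivAt (fun x : ℝ => Real.log (1+x)) (1/(1+x)) x := by
        simpa using h1.log (ne_of_gt hx0)
      have := (hlog.sub (hasDerivAt_id x)).add
        (((hasDerivAt_pow 2 x)).div_const 2)
      exact this.congr_deriv (by norm_num))
    (fun x hx => by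
      have hx0 : (0:ℝ) < 1 + x := by nlinarith [hx.1]
      show 0 ≤ 1/(1+x) - 1 + x
      have : 1/(1+x) - 1 + x = x^2/(1+x) := by field_simp; ring
      rw [this]; positivity)
  simp only [add_zero, Real.log_one] at h
  norm_num at h ⊢
  linarith

/-- `(1+u) log (1+u) ≥ u + u²/2` for `-1 < u ≤ 0`. -/
lemma te_psi_neg {u : ℝ} (h1 : -1 < u) (h2 : u ≤ 0) :
    u + u^2/2 ≤ (1+u) * Real.log (1+u) := by
  have h := te_anti_Icc (a := u) (b := 0)
    (F := fun x => (1+x) * Real.log (1+x) - x - x^2/2)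
    (F' := fun x => Real.log (1+x) - x) h2
    (fun x hx => by
      have hx0 : (0:ℝ) < 1 + x := by nlinarith [hx.1]
      have h1' : HasDerivAt (fun x : ℝ => 1 + x) 1 x := by
        simpa using (hasDerivAt_id x).const_add 1
      have hlog : HasDerivAt (fun x : ℝ => Real.log (1+x)) (1/(1+x)) x := by
        simpa using h1'.log (ne_of_gt hx0)
      have hmul : HasDerivAt (fun x : ℝ => (1+x) * Real.log (1+x))
          (1 * Real.log (1+x) + (1+x) * (1/(1+x))) x := h1'.mul hlog
      have heq : 1 * Real.log (1+x) + (1+x) * (1/(1+x)) = Real.log (1+x) + 1 := by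
        field_simp
      rw [heq] at hmul
      have := (hmul.sub (hasDerivAt_id x)).sub ((hasDerivAt_pow 2 x).div_const 2)
      exact this.congr_deriv (by norm_num))
    (fun x hx => by
      show Real.log (1+x) - x ≤ 0
      have hx0 : (0:ℝ) < 1 + x := by nlinarith [hx.1]
      have := Real.log_le_sub_one_of_pos hx0
      linarith)
  simp only [add_zero, Real.log_one] at h
  norm_num at h
  linarith

/-- Combined: `(1+u) log (1+u) ≥ u + u²/2 - |u|³/2` for `u ≥ -1/2`. -/
lemma te_psi {u : ℝ} (hu : -(1/2 : ℝ) ≤ u) :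
    u + u^2/2 - |u|^3/2 ≤ (1+u) * Real.log (1+u) := by
  rcases le_or_gt u 0 with h | h
  · have := te_psi_neg (by linarith) h
    have habs : (0:ℝ) ≤ |u|^3 := by positivity
    linarith
  · have hlog := te_log_lb (le_of_lt h)
    have habs : |u| = u := abs_of_pos h
    have h1u : (0:ℝ) < 1 + u := by linarith
    have : (1+u) * (u - u^2/2) ≤ (1+u) * Real.log (1+u) :=
      mul_le_mul_of_nonneg_left hlog (le_of_lt h1u)
    rw [habs]
    nlinarith

/-- `t log t - t + 1 ≥ (t-1)²/(2t)` for `t ≥ 1`. -/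
lemma te_phi_ge_one {t : ℝ} (ht : 1 ≤ t) :
    (t-1)^2/(2*t) ≤ t * Real.log t - t + 1 := by
  have h := te_mono_Icc (a := 1) (b := t)
    (F := fun x => x * Real.log x - x + 1 - (x-1)^2/(2*x))
    (F' := fun x => Real.log x - 1/2 + 1/(2*x^2)) ht
    (fun x hx => by
      have hx0 : (0:ℝ) < x := by linarith [hx.1]
      have hlog : HasDerivAt Real.log (1/x) x := by
        simpa using Real.hasDerivAt_log (ne_of_gt hx0)
      have hmul : HasDerivAt (fun x : ℝ => x * Real.log x)
          (1 * Real.log x + x * (1/x)) x := (hasDerivAt_id x).mul hlog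
      have hq : HasDerivAt (fun x : ℝ => (x-1)^2/(2*x))
          ((2*(x-1)*1*(2*x) - (x-1)^2*2) / (2*x)^2) x := by
        have hnum : HasDerivAt (fun x : ℝ => (x-1)^2) (2*(x-1)*1) x := by
          exact (((hasDerivAt_id x).sub_const 1).pow 2).congr_deriv (by norm_num)
        have hden : HasDerivAt (fun x : ℝ => 2*x) 2 x := by
          simpa using (hasDerivAt_id x).const_mul 2
        exact hnum.div hden (by positivity)
      have := (hmul.sub (hasDerivAt_id x)).add_const 1 |>.sub hq
      refine this.congr_deriv ?_
      field_simp
      ring)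
    (fun x hx => by
      show 0 ≤ Real.log x - 1/2 + 1/(2*x^2)
      have hx0 : (0:ℝ) < x := by linarith [hx.1]
      have hlb := Real.one_sub_inv_le_log_of_pos hx0
      have hsq : 0 ≤ (1 - 1/x)^2/2 := by positivity
      have heq : (1 - 1/x)^2/2 = 1/2 - 1/x + 1/(2*x^2) := by
        field_simp; ring
      rw [heq] at hsq
      have hxinv : x⁻¹ = 1/x := by rw [one_div]
      rw [hxinv] at hlb
      linarith)
  simp only [add_zero, Real.log_one] at h
  norm_num at h
  linarith

/-- `t log t - t + 1 ≥ (1-t)²/2` for `0 ≤ t ≤ 1`. -/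
lemma te_phi_le_one {t : ℝ} (h0 : 0 ≤ t) (ht : t ≤ 1) :
    (1-t)^2/2 ≤ t * Real.log t - t + 1 := by
  rcases eq_or_lt_of_le h0 with h | h
  · rw [← h]; simp; norm_num
  have h5 := te_anti_Icc (a := t) (b := 1)
    (F := fun x => x * Real.log x - x + 1 - (1-x)^2/2)
    (F' := fun x => Real.log x + (1 - x)) ht
    (fun x hx => by
      have hx0 : (0:ℝ) < x := lt_of_lt_of_le h hx.1
      have hlog : HasDerivAt Real.log (1/x) x := by
        simpa using Real.hasDerivAt_log (ne_of_gt hx0)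
      have hmul : HasDerivAt (fun x : ℝ => x * Real.log x)
          (1 * Real.log x + x * (1/x)) x := (hasDerivAt_id x).mul hlog
      have hq : HasDerivAt (fun x : ℝ => (1-x)^2/2) ((2*(1-x)*(-1))/2) x := by
        have : HasDerivAt (fun x : ℝ => (1-x)^2) (2*(1-x)*(-1)) x := by
          have hin : HasDerivAt (fun x : ℝ => 1 - x) (-1) x := by
            simpa using (hasDerivAt_id x).const_sub 1
          have := hin.pow 2
          exact this.congr_deriv (by norm_num)
        exact this.div_const 2
      have := (hmul.sub (hasDerivAt_id x)).add_const 1 |>.sub hq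
      refine this.congr_deriv ?_
      field_simp
      ring)
    (fun x hx => by
      show Real.log x + (1 - x) ≤ 0
      have hx0 : (0:ℝ) < x := lt_of_lt_of_le h hx.1
      have := Real.log_le_sub_one_of_pos hx0
      linarith)
  simp only [Real.log_one] at h5
  norm_num at h5
  linarith

/-- `(log b - log a)(b - a) ≤ (b-a)²/δ` when `a, b ≥ δ > 0`. -/
lemma te_logdiff_ub {a b δ : ℝ} (hδ : 0 < δ) (ha : δ ≤ a) (hb : δ ≤ b) :
    (Real.log b - Real.log a) * (b - a) ≤ (b-a)^2/δ := by
  have ha0 : 0 < a := lt_of_lt_of_le hδ ha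
  have hb0 : 0 < b := lt_of_lt_of_le hδ hb
  wlog hab : a ≤ b with H
  · have := H hδ hb ha hb0 ha0 (le_of_lt (lt_of_not_ge hab))
    have h1 : (Real.log a - Real.log b) * (a - b)
        = (Real.log b - Real.log a) * (b - a) := by ring
    have h2 : (a-b)^2 = (b-a)^2 := by ring
    rw [h1, h2] at this; exact this
  have hlog : Real.log b - Real.log a ≤ (b - a)/a := by
    have := Real.log_le_sub_one_of_pos (show 0 < b/a by positivity)
    rw [Real.log_div (ne_of_gt hb0) (ne_of_gt ha0)] at this
    have : Real.log b - Real.log a ≤ b/a - 1 := this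
    calc Real.log b - Real.log a ≤ b/a - 1 := this
    _ = (b-a)/a := by field_simp
  have h2 : (b-a)/a ≤ (b-a)/δ := by
    apply div_le_div_of_nonneg_left (by linarith) hδ ha
  calc (Real.log b - Real.log a) * (b - a) ≤ ((b-a)/δ) * (b-a) := by
        apply mul_le_mul_of_nonneg_right _ (by linarith)
        linarith
  _ = (b-a)^2/δ := by ring

/-- `(log b - log a)(b - a) ≥ (b-a)²/B` when `0 < a,b ≤ B`. -/
lemma te_logdiff_lb {a b B : ℝ} (ha0 : 0 < a) (hb0 : 0 < b) (ha : a ≤ B) (hb : b ≤ B) :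
    (b-a)^2/B ≤ (Real.log b - Real.log a) * (b - a) := by
  have hB : 0 < B := lt_of_lt_of_le ha0 ha
  wlog hab : a ≤ b with H
  · have := H hb0 ha0 hb ha hB (le_of_lt (lt_of_not_ge hab))
    have h1 : (Real.log a - Real.log b) * (a - b)
        = (Real.log b - Real.log a) * (b - a) := by ring
    have h2 : (a-b)^2 = (b-a)^2 := by ring
    rw [h1, h2] at this; exact this
  have hlog : (b - a)/b ≤ Real.log b - Real.log a := by
    have := Real.log_le_sub_one_of_pos (show 0 < a/b by positivity)
    rw [Real.log_div (ne_of_gt ha0) (ne_of_gt hb0)] at this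
    have h3 : Real.log a - Real.log b ≤ a/b - 1 := this
    have h4 : 1 - a/b ≤ Real.log b - Real.log a := by linarith
    calc (b-a)/b = 1 - a/b := by field_simp
    _ ≤ _ := h4
  have h2 : (b-a)/B ≤ (b-a)/b := by
    apply div_le_div_of_nonneg_left (by linarith) hb0 hb
  calc (b-a)^2/B = ((b-a)/B) * (b-a) := by ring
  _ ≤ ((b-a)/b) * (b-a) := mul_le_mul_of_nonneg_right h2 (by linarith)
  _ ≤ (Real.log b - Real.log a) * (b - a) :=
      mul_le_mul_of_nonneg_right hlog (by linarith)

section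
variable {Ω : Type*} [Fintype Ω]

set_option maxHeartbeats 1000000 in
lemma te_poincare [Nonempty Ω]
    (π : Ω → ℝ) (p : Ω → Ω → ℝ) (CMLSI : ℝ)
    (hπpos : ∀ x, 0 < π x) (hπsum : ∑ x, π x = 1)
    (hp : ∀ x y, x ≠ y → 0 ≤ p x y)
    (hMLSI : ∀ f : Ω → ℝ, (∀ x, 0 < f x) →
      (∑ x, π x * f x * Real.log (f x)) -
          (∑ x, π x * f x) * Real.log (∑ x, π x * f x) ≤
        CMLSI * ((1 / 2) * ∑ x, ∑ y,
          (Real.log (f y) - Real.log (f x)) * (f y - f x) * (π x * p x y)))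
    (h : Ω → ℝ) (hmean : ∑ x, π x * h x = 0) :
    ∑ x, π x * h x ^ 2 ≤
      2 * CMLSI * ((1/2) * ∑ x, ∑ y, (h y - h x)^2 * (π x * p x y)) := by
  classical
  set N : ℝ := 1 + ∑ x, |h x| with hNdef
  have habs_sum : ∀ x, |h x| ≤ ∑ x, |h x| := fun x =>
    Finset.single_le_sum (fun y _ => abs_nonneg (h y)) (Finset.mem_univ x)
  have hN1 : 1 ≤ N := by
    have : 0 ≤ ∑ x, |h x| := Finset.sum_nonneg fun y _ => abs_nonneg (h y)
    simp [hNdef]; linarith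
  have hN0 : 0 < N := by linarith
  have hhN : ∀ x, |h x| ≤ N := fun x => by
    have := habs_sum x; simp only [hNdef]; linarith
  set V : ℝ := ∑ x, π x * h x ^ 2 with hVdef
  set T : ℝ := ∑ x, π x * |h x| ^ 3 with hTdef
  set E : ℝ := (1/2) * ∑ x, ∑ y, (h y - h x)^2 * (π x * p x y) with hEdef
  clear_value N V T E
  have hT0 : 0 ≤ T := hTdef ▸ Finset.sum_nonneg fun x _ =>
    mul_nonneg (hπpos x).le (by positivity)
  have hE0 : 0 ≤ E := by
    rw [hEdef]
    apply mul_nonneg (by norm_num)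
    apply Finset.sum_nonneg; intro x _
    apply Finset.sum_nonneg; intro y _
    rcases eq_or_ne x y with rfl | hxy
    · simp
    · exact mul_nonneg (sq_nonneg _) (mul_nonneg (hπpos x).le (hp x y hxy))
  -- the key finite-ε estimate
  have key : ∀ ε : ℝ, 0 < ε → ε * N ≤ 1/2 →
      V/2 ≤ CMLSI * E + ε * (2*N*|CMLSI*E| + T/2) := by
    intro ε hε hεN
    set f : Ω → ℝ := fun x => 1 + ε * h x with hfdef
    clear_value f
    have hbound : ∀ x, |ε * h x| ≤ 1/2 := fun x => by
      rw [abs_mul, abs_of_pos hε]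
      calc ε * |h x| ≤ ε * N := by
            exact mul_le_mul_of_nonneg_left (hhN x) hε.le
      _ ≤ 1/2 := hεN
    have hfpos : ∀ x, 0 < f x := fun x => by
      have := abs_le.1 (hbound x); simp only [hfdef]; linarith [this.1]
    have hflb : ∀ x, 1 - ε*N ≤ f x := fun x => by
      have h1 : -(ε * N) ≤ ε * h x := by
        have := neg_abs_le (ε * h x)
        have h2 : |ε * h x| ≤ ε * N := by
          rw [abs_mul, abs_of_pos hε]
          exact mul_le_mul_of_nonneg_left (hhN x) hε.le
        linarith
      simp only [hfdef]; linarith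
    have hfub : ∀ x, f x ≤ 1 + ε*N := fun x => by
      have h2 : |ε * h x| ≤ ε * N := by
        rw [abs_mul, abs_of_pos hε]
        exact mul_le_mul_of_nonneg_left (hhN x) hε.le
      have := abs_le.1 h2
      simp only [hfdef]; linarith [this.2]
    have hδ : (0:ℝ) < 1 - ε*N := by nlinarith [hεN]
    have hδhalf : (1:ℝ)/2 ≤ 1 - ε*N := by linarith
    -- normalization
    have hsum1 : ∑ x, π x * f x = 1 := by
      have : ∀ x, π x * f x = π x + ε * (π x * h x) := fun x => by
        simp only [hfdef]; ring
      rw [Finset.sum_congr rfl fun x _ => this x, Finset.sum_add_distrib,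
        ← Finset.mul_sum, hmean, hπsum]; ring
    have hm := hMLSI f hfpos
    rw [hsum1, Real.log_one, mul_zero, sub_zero] at hm
    -- entropy lower bound
    have hlow : ε^2/2 * V - ε^3/2 * T ≤ ∑ x, π x * f x * Real.log (f x) := by
      have hstep : ∀ x, π x * (ε * h x + (ε * h x)^2/2 - ε^3 * |h x|^3/2)
          ≤ π x * f x * Real.log (f x) := by
        intro x
        have hu : -(1/2 : ℝ) ≤ ε * h x := by linarith [(abs_le.1 (hbound x)).1]
        have := te_psi hu
        have habs3 : |ε * h x|^3 = ε^3 * |h x|^3 := by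
          rw [abs_mul, abs_of_pos hε, mul_pow]
        rw [habs3] at this
        calc π x * (ε * h x + (ε * h x)^2/2 - ε^3 * |h x|^3/2)
            ≤ π x * ((1 + ε * h x) * Real.log (1 + ε * h x)) :=
              mul_le_mul_of_nonneg_left this (hπpos x).le
        _ = π x * f x * Real.log (f x) := by simp only [hfdef]; ring
      calc ε^2/2 * V - ε^3/2 * T
          = ∑ x, π x * (ε * h x + (ε * h x)^2/2 - ε^3 * |h x|^3/2) := by
            have : ∀ x, π x * (ε * h x + (ε * h x)^2/2 - ε^3 * |h x|^3/2)
                = ε * (π x * h x) + ε^2/2 * (π x * h x^2) - ε^3/2 * (π x * |h x|^3) :=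
              fun x => by ring
            rw [Finset.sum_congr rfl fun x _ => this x]
            rw [Finset.sum_sub_distrib, Finset.sum_add_distrib,
              ← Finset.mul_sum, ← Finset.mul_sum, ← Finset.mul_sum, hmean]
            simp only [hVdef, hTdef]; ring
      _ ≤ _ := Finset.sum_le_sum fun x _ => hstep x
    -- Dirichlet form bounds
    set D : ℝ := (1/2) * ∑ x, ∑ y,
        (Real.log (f y) - Real.log (f x)) * (f y - f x) * (π x * p x y) with hDdef
    clear_value D
    have hDub : D ≤ (ε^2/(1 - ε*N)) * E := by
      have hterm : ∀ x y : Ω,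
          (Real.log (f y) - Real.log (f x)) * (f y - f x) * (π x * p x y)
          ≤ (ε^2/(1 - ε*N)) * ((h y - h x)^2 * (π x * p x y)) := by
        intro x y
        rcases eq_or_ne x y with rfl | hxy
        · simp
        · have hπp : 0 ≤ π x * p x y := mul_nonneg (hπpos x).le (hp x y hxy)
          have := te_logdiff_ub hδ (hflb x) (hflb y)
          have hfy : f y - f x = ε * (h y - h x) := by simp only [hfdef]; ring
          rw [hfy] at this
          have h2 : (ε * (h y - h x))^2/(1 - ε*N)
              = (ε^2/(1 - ε*N)) * (h y - h x)^2 := by ring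
          rw [h2] at this
          calc (Real.log (f y) - Real.log (f x)) * (f y - f x) * (π x * p x y)
              ≤ ((ε^2/(1 - ε*N)) * (h y - h x)^2) * (π x * p x y) := by
                apply mul_le_mul_of_nonneg_right _ hπp
                rw [hfy]; exact this
          _ = (ε^2/(1 - ε*N)) * ((h y - h x)^2 * (π x * p x y)) := by ring
      calc D ≤ (1/2) * ∑ x, ∑ y, (ε^2/(1 - ε*N)) * ((h y - h x)^2 * (π x * p x y)) := by
            simp only [hDdef]
            apply mul_le_mul_of_nonneg_left _ (by norm_num : (0:ℝ) ≤ 1/2)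
            exact Finset.sum_le_sum fun x _ => Finset.sum_le_sum fun y _ => hterm x y
      _ = (ε^2/(1 - ε*N)) * E := by
            simp only [hEdef, ← Finset.mul_sum]; ring
    have hDlb : (ε^2/(1 + ε*N)) * E ≤ D := by
      have hterm : ∀ x y : Ω,
          (ε^2/(1 + ε*N)) * ((h y - h x)^2 * (π x * p x y))
          ≤ (Real.log (f y) - Real.log (f x)) * (f y - f x) * (π x * p x y) := by
        intro x y
        rcases eq_or_ne x y with rfl | hxy
        · simp
        · have hπp : 0 ≤ π x * p x y := mul_nonneg (hπpos x).le (hp x y hxy)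
          have := te_logdiff_lb (hfpos x) (hfpos y) (hfub x) (hfub y)
          have hfy : f y - f x = ε * (h y - h x) := by simp only [hfdef]; ring
          rw [hfy] at this
          have h2 : (ε * (h y - h x))^2/(1 + ε*N)
              = (ε^2/(1 + ε*N)) * (h y - h x)^2 := by ring
          rw [h2] at this
          calc (ε^2/(1 + ε*N)) * ((h y - h x)^2 * (π x * p x y))
              = ((ε^2/(1 + ε*N)) * (h y - h x)^2) * (π x * p x y) := by ring
          _ ≤ _ := by
              apply mul_le_mul_of_nonneg_right _ hπp
              rw [hfy]; exact this
      calc (ε^2/(1 + ε*N)) * E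
          = (1/2) * ∑ x, ∑ y, (ε^2/(1 + ε*N)) * ((h y - h x)^2 * (π x * p x y)) := by
            simp only [hEdef, ← Finset.mul_sum]; ring
      _ ≤ D := by
            simp only [hDdef]
            apply mul_le_mul_of_nonneg_left _ (by norm_num : (0:ℝ) ≤ 1/2)
            exact Finset.sum_le_sum fun x _ => Finset.sum_le_sum fun y _ => hterm x y
    -- combine
    have hcomb : ε^2/2 * V - ε^3/2 * T ≤ ε^2 * (CMLSI * E + ε * (2*N*|CMLSI*E|)) := by
      rcases le_or_gt 0 CMLSI with hC | hC
      · have hCE : 0 ≤ CMLSI * E := mul_nonneg hC hE0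
        have h1 : CMLSI * D ≤ CMLSI * ((ε^2/(1 - ε*N)) * E) :=
          mul_le_mul_of_nonneg_left hDub hC
        have h2 : CMLSI * ((ε^2/(1 - ε*N)) * E)
            ≤ ε^2 * (CMLSI * E + ε * (2*N*|CMLSI*E|)) := by
          rw [abs_of_nonneg hCE]
          have hu0 : 0 ≤ ε*N := mul_nonneg hε.le hN0.le
          have hinv : 1/(1 - ε*N) ≤ 1 + 2*(ε*N) := by
            rw [div_le_iff₀ hδ]
            nlinarith [mul_nonneg hu0 (by linarith : (0:ℝ) ≤ 1 - 2*(ε*N))]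
          have : CMLSI * ((ε^2/(1 - ε*N)) * E) = ε^2 * ((CMLSI * E) * (1/(1 - ε*N))) := by
            field_simp
          rw [this]
          apply mul_le_mul_of_nonneg_left _ (sq_nonneg ε)
          calc (CMLSI * E) * (1/(1 - ε*N)) ≤ (CMLSI * E) * (1 + 2*(ε*N)) :=
                mul_le_mul_of_nonneg_left hinv hCE
          _ = CMLSI * E + ε * (2*N*(CMLSI*E)) := by ring
        linarith [hlow.trans hm, h1, h2]
      · have hCE : CMLSI * E ≤ 0 := mul_nonpos_of_nonpos_of_nonneg hC.le hE0
        have h1 : CMLSI * D ≤ CMLSI * ((ε^2/(1 + ε*N)) * E) := by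
          exact mul_le_mul_of_nonpos_left hDlb hC.le
        have h2 : CMLSI * ((ε^2/(1 + ε*N)) * E)
            ≤ ε^2 * (CMLSI * E + ε * (2*N*|CMLSI*E|)) := by
          rw [abs_of_nonpos hCE]
          have hεN0 : 0 ≤ ε * N := mul_nonneg hε.le hN0.le
          have hden : (0:ℝ) < 1 + ε*N := by linarith
          have heq2 : CMLSI * ((ε^2/(1 + ε*N)) * E) = ε^2 * ((CMLSI * E) * (1/(1 + ε*N))) := by
            field_simp
          rw [heq2]
          apply mul_le_mul_of_nonneg_left _ (sq_nonneg ε)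
          have hstep1 : (CMLSI*E) * (1/(1+ε*N)) - CMLSI*E
              = (-(CMLSI*E)) * (ε*N/(1+ε*N)) := by field_simp; ring
          have hstep2 : ε*N/(1+ε*N) ≤ ε*N := by
            rw [div_le_iff₀ hden]; nlinarith
          have hstep3 : (-(CMLSI*E)) * (ε*N/(1+ε*N)) ≤ (-(CMLSI*E)) * (ε*N) :=
            mul_le_mul_of_nonneg_left hstep2 (by linarith)
          have hstep4 : ε * (2*N*(-(CMLSI*E))) = 2*((-(CMLSI*E)) * (ε*N)) := by ring
          have hstep5 : 0 ≤ (-(CMLSI*E))*(ε*N) := mul_nonneg (by linarith) hεN0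
          linarith
        linarith [hlow.trans hm, h1, h2]
    -- divide by ε²
    have hε2 : (0:ℝ) < ε^2 := by positivity
    have hexp : ε^2 * (CMLSI * E + ε * (2*N*|CMLSI*E| + T/2))
        = ε^2 * (CMLSI * E + ε * (2*N*|CMLSI*E|)) + ε^3/2 * T := by ring
    have hfin : ε^2 * (V/2) ≤ ε^2 * (CMLSI * E + ε * (2*N*|CMLSI*E| + T/2)) := by
      rw [hexp]
      have h9 : ε^2 * (V/2) = ε^2/2 * V := by ring
      rw [h9]; linarith [hcomb]
    exact le_of_mul_le_mul_left hfin hε2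
  -- take ε → 0
  by_contra hcon
  push_neg at hcon
  have hd : 0 < V/2 - CMLSI * E := by
    have h8 : 2 * CMLSI * E = 2 * (CMLSI * E) := by ring
    rw [h8] at hcon
    linarith
  obtain ⟨K, hKdef⟩ : ∃ K : ℝ, K = 2*N*|CMLSI*E| + T/2 := ⟨_, rfl⟩
  have hK0 : 0 ≤ K := by
    have h7 : 0 ≤ 2*N*|CMLSI*E| :=
      mul_nonneg (by linarith : (0:ℝ) ≤ 2*N) (abs_nonneg _)
    rw [hKdef]; linarith
  obtain ⟨ε, hεdef⟩ : ∃ ε : ℝ, ε = min (1/(2*N)) ((V/2 - CMLSI * E)/(K+1)) := ⟨_, rfl⟩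
  have hε0 : 0 < ε := by
    rw [hεdef]
    exact lt_min (by positivity) (div_pos hd (by linarith))
  have hεN : ε * N ≤ 1/2 := by
    have h1 : ε ≤ 1/(2*N) := hεdef ▸ min_le_left _ _
    calc ε * N ≤ (1/(2*N)) * N := mul_le_mul_of_nonneg_right h1 hN0.le
    _ = 1/2 := by field_simp
  have hkey := key ε hε0 hεN
  rw [← hKdef] at hkey
  have hεd : ε ≤ (V/2 - CMLSI * E)/(K+1) := hεdef ▸ min_le_right _ _
  have hεK : ε * K ≤ ((V/2 - CMLSI * E)/(K+1)) * K :=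
    mul_le_mul_of_nonneg_right hεd hK0
  have hlt : ((V/2 - CMLSI * E)/(K+1)) * K < V/2 - CMLSI * E := by
    rw [div_mul_eq_mul_div, div_lt_iff₀ (by linarith : (0:ℝ) < K+1)]
    nlinarith
  linarith

end

open scoped RealInnerProductSpace

section poisson
variable {Ω : Type*} [Fintype Ω]

/-- The weighted graph Laplacian as a linear map on Euclidean space. -/
noncomputable def teLap (c : Ω → Ω → ℝ) : EuclideanSpace ℝ Ω →ₗ[ℝ] EuclideanSpace ℝ Ω where
  toFun g := WithLp.toLp 2 (fun x => ∑ y, c x y * (g y - g x))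
  map_add' u v := by
    ext x
    show ∑ y, c x y * ((u y + v y) - (u x + v x))
        = (∑ y, c x y * (u y - u x)) + ∑ y, c x y * (v y - v x)
    rw [← Finset.sum_add_distrib]
    exact Finset.sum_congr rfl fun y _ => by ring
  map_smul' a u := by
    ext x
    show ∑ y, c x y * (a * u y - a * u x) = a * ∑ y, c x y * (u y - u x)
    rw [Finset.mul_sum]
    exact Finset.sum_congr rfl fun y _ => by ring

lemma teLap_apply (c : Ω → Ω → ℝ) (u : EuclideanSpace ℝ Ω) (x : Ω) :
    teLap c u x = ∑ y, c x y * (u y - u x) := rfl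

lemma te_swap (c : Ω → Ω → ℝ) (hsym : ∀ x y, c x y = c y x) (F : Ω → Ω → ℝ) :
    ∑ x, ∑ y, c x y * F x y = ∑ x, ∑ y, c x y * F y x := by
  rw [Finset.sum_comm]
  exact Finset.sum_congr rfl fun x _ => Finset.sum_congr rfl fun y _ => by rw [hsym]

/-- Discrete integration by parts. -/
lemma te_parts (c : Ω → Ω → ℝ) (hsym : ∀ x y, c x y = c y x) (v w : Ω → ℝ) :
    ∑ x, v x * (∑ y, c x y * (w y - w x))
      = -(1/2) * ∑ x, ∑ y, c x y * ((v y - v x) * (w y - w x)) := by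
  have e1 : ∑ x, v x * (∑ y, c x y * (w y - w x))
      = (∑ x, ∑ y, c x y * (v x * w y)) - ∑ x, ∑ y, c x y * (v x * w x) := by
    rw [← Finset.sum_sub_distrib]
    refine Finset.sum_congr rfl fun x _ => ?_
    rw [Finset.mul_sum, ← Finset.sum_sub_distrib]
    exact Finset.sum_congr rfl fun y _ => by ring
  have e2 : ∑ x, ∑ y, c x y * ((v y - v x) * (w y - w x))
      = (((∑ x, ∑ y, c x y * (v y * w y)) - ∑ x, ∑ y, c x y * (v y * w x))
        - ∑ x, ∑ y, c x y * (v x * w y)) + ∑ x, ∑ y, c x y * (v x * w x) := by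
    simp only [← Finset.sum_add_distrib, ← Finset.sum_sub_distrib]
    exact Finset.sum_congr rfl fun x _ => Finset.sum_congr rfl fun y _ => by ring
  have s1 : ∑ x, ∑ y, c x y * (v y * w y) = ∑ x, ∑ y, c x y * (v x * w x) :=
    te_swap c hsym (fun x y => v y * w y)
  have s2 : ∑ x, ∑ y, c x y * (v y * w x) = ∑ x, ∑ y, c x y * (v x * w y) :=
    te_swap c hsym (fun x y => v y * w x)
  rw [e1, e2, s1, s2]
  ring

end poisson

set_option maxHeartbeats 2000000 in
/-- Transport–entropy inequality: a modified log-Sobolev inequality for `p` implies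
`W_{c,2}(μ, π)² ≤ 4 C_MLSI · ‖dμ/dπ‖_∞ · KL(μ ‖ π)`. -/
theorem transport_entropy_inequality {Ω : Type*} [Fintype Ω] [DecidableEq Ω] [Nonempty Ω]
    (π : Ω → ℝ) (p : Ω → Ω → ℝ)
    (hπpos : ∀ x, 0 < π x) (hπsum : ∑ x, π x = 1)
    (hp : ∀ x y, x ≠ y → 0 ≤ p x y) (hrow : ∀ x, ∑ y, p x y = 0)
    (hrev : ∀ x y, π x * p x y = π y * p y x)
    (hconn : (kernelGraph p).Connected)
    (c : Ω → Ω → ℝ) (hc : ∀ x y, c x y = if x = y then 0 else π x * p x y)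
    (CMLSI : ℝ)
    (hMLSI : ∀ f : Ω → ℝ, (∀ x, 0 < f x) →
      (∑ x, π x * f x * Real.log (f x)) -
          (∑ x, π x * f x) * Real.log (∑ x, π x * f x) ≤
        CMLSI * ((1 / 2) * ∑ x, ∑ y,
          (Real.log (f y) - Real.log (f x)) * (f y - f x) * (π x * p x y))) :
    ∀ μ : Ω → ℝ, (∀ x, 0 ≤ μ x) → (∑ x, μ x = 1) →
      Wc2 c μ π ^ 2 ≤
        4 * CMLSI * (⨆ x, μ x / π x) * ∑ x, μ x * Real.log (μ x / π x) := by
  intro μ hμ0 hμ1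
  classical
  -- basic properties of c
  have hcdiag : ∀ x, c x x = 0 := fun x => by rw [hc]; simp
  have hcsym : ∀ x y, c x y = c y x := by
    intro x y
    rcases eq_or_ne x y with rfl | hxy
    · rfl
    · rw [hc, hc, if_neg hxy, if_neg (Ne.symm hxy)]
      exact hrev x y
  have hc0 : ∀ x y, 0 ≤ c x y := by
    intro x y
    rcases eq_or_ne x y with rfl | hxy
    · rw [hcdiag]
    · rw [hc, if_neg hxy]
      exact mul_nonneg (hπpos x).le (hp x y hxy)
  have hcadj : ∀ x y, (kernelGraph p).Adj x y → 0 < c x y := by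
    intro x y hadj
    obtain ⟨hxy, hpp⟩ : x ≠ y ∧ (0 < p x y ∨ 0 < p y x) := hadj
    rcases hpp with hpos | hpos
    · rw [hc, if_neg hxy]; exact mul_pos (hπpos x) hpos
    · rw [hcsym, hc, if_neg (Ne.symm hxy)]; exact mul_pos (hπpos y) hpos
  -- inner product formula
  have hinner : ∀ a b : EuclideanSpace ℝ Ω, ⟪a, b⟫ = ∑ x, a x * b x := fun a b => by
    simp [PiLp.inner_apply, RCLike.inner_apply, conj_trivial, mul_comm]
  -- symmetry of the Laplacian
  have hsymT : ∀ u v : EuclideanSpace ℝ Ω, ⟪teLap c u, v⟫ = ⟪u, teLap c v⟫ := by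
    intro u v
    rw [hinner, hinner]
    have h1 : ∑ x, teLap c u x * v x = ∑ x, v x * (∑ y, c x y * (u y - u x)) :=
      Finset.sum_congr rfl fun x _ => by rw [teLap_apply]; ring
    have h2 : ∑ x, u x * teLap c v x = ∑ x, u x * (∑ y, c x y * (v y - v x)) :=
      Finset.sum_congr rfl fun x _ => by rw [teLap_apply]
    rw [h1, h2, te_parts c hcsym (fun z => v z) (fun z => u z),
      te_parts c hcsym (fun z => u z) (fun z => v z)]
    have : ∑ x, ∑ y, c x y * ((v y - v x) * (u y - u x))
        = ∑ x, ∑ y, c x y * ((u y - u x) * (v y - v x)) :=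
      Finset.sum_congr rfl fun x _ => Finset.sum_congr rfl fun y _ => by ring
    rw [this]
  -- kernel elements are constant
  have hker : ∀ u : EuclideanSpace ℝ Ω, teLap c u = 0 → ∀ x y : Ω, u x = u y := by
    intro u hu x y
    have hu' : ∀ x, ∑ y, c x y * (u y - u x) = 0 := fun x => by
      have : teLap c u x = (0 : EuclideanSpace ℝ Ω) x := by rw [hu]
      rw [teLap_apply] at this
      simpa using this
    have hzero : ∑ x, ∑ y, c x y * ((u y - u x) * (u y - u x)) = 0 := by
      have hparts := te_parts c hcsym (fun z => u z) (fun z => u z)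
      have hL : ∑ x, u x * (∑ y, c x y * (u y - u x)) = 0 := by
        rw [Finset.sum_congr rfl fun x _ => by rw [hu' x, mul_zero]]
        exact Finset.sum_const_zero
      rw [hL] at hparts
      linarith [hparts]
    have hterm0 : ∀ a b : Ω, c a b * ((u b - u a) * (u b - u a)) = 0 := by
      intro a b
      have houter := (Finset.sum_eq_zero_iff_of_nonneg
        (fun a _ => Finset.sum_nonneg fun b _ =>
          mul_nonneg (hc0 a b) (mul_self_nonneg _))).1 hzero a (Finset.mem_univ a)
      exact (Finset.sum_eq_zero_iff_of_nonneg
        (fun b _ => mul_nonneg (hc0 a b) (mul_self_nonneg _))).1 houter b (Finset.mem_univ b)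
    have hedge : ∀ a b : Ω, (kernelGraph p).Adj a b → u a = u b := by
      intro a b hab
      have hcab := hcadj a b hab
      have h9 : (u b - u a) * (u b - u a) = 0 := by
        rcases mul_eq_zero.1 (hterm0 a b) with h | h
        · exact absurd h (ne_of_gt hcab)
        · exact h
      have := mul_self_eq_zero.1 h9
      linarith
    obtain ⟨wk⟩ := hconn.preconnected x y
    induction wk with
    | nil => rfl
    | cons h q ih => exact (hedge _ _ h).trans ih
  -- solvability of the Poisson equation
  have hrange : ∀ v : EuclideanSpace ℝ Ω, (∑ x, v x = 0) →
      v ∈ LinearMap.range (teLap c) := by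
    intro v hv
    rw [← Submodule.orthogonal_orthogonal (LinearMap.range (teLap c)),
      Submodule.mem_orthogonal]
    intro u hu
    have huz : ∀ z : EuclideanSpace ℝ Ω, ⟪teLap c z, u⟫ = 0 := fun z =>
      (Submodule.mem_orthogonal _ u).1 hu _ (LinearMap.mem_range_self _ z)
    have hTu : teLap c u = 0 :=
      inner_self_eq_zero (𝕜 := ℝ) |>.1
        (by rw [← hsymT (teLap c u) u]; exact huz (teLap c u))
    obtain x0 := Classical.arbitrary Ω
    have hconst : ∀ x, u x = u x0 := fun x => hker u hTu x x0
    calc ⟪u, v⟫ = ∑ x, u x * v x := hinner u v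
    _ = ∑ x, u x0 * v x := Finset.sum_congr rfl fun x _ => by rw [hconst x]
    _ = u x0 * ∑ x, v x := (Finset.mul_sum _ _ _).symm
    _ = 0 := by rw [hv, mul_zero]
  -- solve the Poisson equation
  have hvsum : ∑ x, (μ x - π x) = 0 := by
    rw [Finset.sum_sub_distrib, hμ1, hπsum, sub_self]
  obtain ⟨g, hgT⟩ := hrange (WithLp.toLp 2 (fun x => μ x - π x) : EuclideanSpace ℝ Ω) hvsum
  have hg : ∀ x, ∑ y, c x y * (g y - g x) = μ x - π x := fun x => by
    have : teLap c g x = (WithLp.toLp 2 (fun x => μ x - π x) : EuclideanSpace ℝ Ω) x := by rw [hgT]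
    rw [teLap_apply] at this
    exact this
  -- cost of the candidate flux
  obtain ⟨A, hAdef⟩ : ∃ A : ℝ,
      A = (1/2) * ∑ x, ∑ y, c x y * ((g y - g x) * (g y - g x)) := ⟨_, rfl⟩
  have hA0 : 0 ≤ A := by
    rw [hAdef]
    exact mul_nonneg (by norm_num) (Finset.sum_nonneg fun x _ =>
      Finset.sum_nonneg fun y _ => mul_nonneg (hc0 x y) (mul_self_nonneg _))
  have hApair : A = ∑ x, (π x - μ x) * g x := by
    have hparts := te_parts c hcsym (fun z => g z) (fun z => g z)
    have hL : ∑ x, g x * (∑ y, c x y * (g y - g x)) = ∑ x, g x * (μ x - π x) :=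
      Finset.sum_congr rfl fun x _ => by rw [hg x]
    rw [hL] at hparts
    have e1 : ∑ x, (π x - μ x) * g x = ∑ x, -(g x * (μ x - π x)) :=
      Finset.sum_congr rfl fun x _ => by ring
    rw [e1, Finset.sum_neg_distrib, hparts, hAdef]
    ring
  -- the density F = μ/π and its sup M
  obtain ⟨F, hF⟩ : ∃ F : Ω → ℝ, F = fun x => μ x / π x := ⟨_, rfl⟩
  have hFx : ∀ x, F x = μ x / π x := fun x => by rw [hF]
  have hμF : ∀ x, μ x = π x * F x := fun x => by
    rw [hFx, mul_comm, div_mul_cancel₀ _ (ne_of_gt (hπpos x))]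
  have hF0 : ∀ x, 0 ≤ F x := fun x => by
    rw [hFx]; exact div_nonneg (hμ0 x) (hπpos x).le
  set M : ℝ := ⨆ x, μ x / π x with hMdef
  clear_value M
  have hFM : ∀ x, F x ≤ M := fun x => by
    rw [hFx, hMdef]
    exact le_ciSup (f := fun x => μ x / π x)
      (Set.Finite.bddAbove (Set.finite_range _)) x
  have hM1 : 1 ≤ M := by
    by_contra hlt
    push_neg at hlt
    have hall : ∀ x ∈ Finset.univ (α := Ω), μ x < π x := by
      intro x _
      have h1 : F x < 1 := lt_of_le_of_lt (hFM x) hlt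
      rw [hFx] at h1
      exact (div_lt_one (hπpos x)).1 h1
    have hbig := Finset.sum_lt_sum_of_nonempty Finset.univ_nonempty hall
    rw [hμ1, hπsum] at hbig
    exact lt_irrefl _ hbig
  -- relative entropy
  obtain ⟨KL, hKL⟩ : ∃ v : ℝ, v = ∑ x, π x * (F x * Real.log (F x)) := ⟨_, rfl⟩
  have hKLgoal : ∑ x, μ x * Real.log (μ x / π x) = KL := by
    rw [hKL]
    refine Finset.sum_congr rfl fun x _ => ?_
    rw [← hFx x, hμF x]
    ring
  have hsumF : ∑ x, π x * F x = 1 := by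
    rw [← hμ1]; exact Finset.sum_congr rfl fun x _ => (hμF x).symm
  -- pointwise entropy estimate
  have hphi : ∀ x, (F x - 1)^2 ≤ 2*M*(F x * Real.log (F x) - F x + 1) := by
    intro x
    rcases le_or_gt 1 (F x) with h1 | h1
    · have hb := te_phi_ge_one h1
      have hFpos : (0:ℝ) < F x := lt_of_lt_of_le one_pos h1
      have hφ0 : 0 ≤ F x * Real.log (F x) - F x + 1 := le_trans (by positivity) hb
      rw [div_le_iff₀ (by positivity)] at hb
      have h3 : (F x * Real.log (F x) - F x + 1) * (2 * F x)
          ≤ (F x * Real.log (F x) - F x + 1) * (2 * M) :=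
        mul_le_mul_of_nonneg_left (by linarith [hFM x]) hφ0
      nlinarith
    · have hb := te_phi_le_one (hF0 x) h1.le
      have hφ0 : 0 ≤ F x * Real.log (F x) - F x + 1 := le_trans (by positivity) hb
      have h2 : (F x - 1)^2 ≤ 2*(F x * Real.log (F x) - F x + 1) := by
        have e : (F x - 1)^2 = (1 - F x)^2 := by ring
        rw [e]; linarith
      nlinarith [hM1, hφ0]
  -- variance bound by entropy
  have hVarF : ∑ x, π x * (F x - 1)^2 ≤ 2*M*KL := by
    calc ∑ x, π x * (F x - 1)^2
        ≤ ∑ x, π x * (2*M*(F x * Real.log (F x) - F x + 1)) :=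
          Finset.sum_le_sum fun x _ =>
            mul_le_mul_of_nonneg_left (hphi x) (hπpos x).le
    _ = 2*M*(∑ x, π x * (F x * Real.log (F x))) - 2*M*(∑ x, π x * F x)
          + 2*M*(∑ x, π x) := by
        have e : ∀ x : Ω, π x * (2*M*(F x * Real.log (F x) - F x + 1))
            = 2*M*(π x * (F x * Real.log (F x))) - 2*M*(π x * F x) + 2*M*(π x) :=
          fun x => by ring
        rw [Finset.sum_congr rfl fun x _ => e x, Finset.sum_add_distrib,
          Finset.sum_sub_distrib, ← Finset.mul_sum, ← Finset.mul_sum, ← Finset.mul_sum]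
    _ = 2*M*KL := by rw [hsumF, hπsum, ← hKL]; ring
  -- centered potential
  obtain ⟨bar, hbar⟩ : ∃ b : ℝ, b = ∑ x, π x * g x := ⟨_, rfl⟩
  obtain ⟨h, hh⟩ : ∃ h : Ω → ℝ, h = fun x => g x - bar := ⟨_, rfl⟩
  have hhx : ∀ x, h x = g x - bar := fun x => by rw [hh]
  have hmean : ∑ x, π x * h x = 0 := by
    have e : ∀ x : Ω, π x * h x = π x * g x - bar * π x := fun x => by
      rw [hhx]; ring
    rw [Finset.sum_congr rfl fun x _ => e x, Finset.sum_sub_distrib,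
      ← Finset.mul_sum, hπsum, ← hbar]
    ring
  have hApair2 : A = ∑ x, (π x * (1 - F x)) * h x := by
    rw [hApair]
    have e1 : ∀ x : Ω, (π x - μ x) * g x
        = (π x * (1 - F x)) * h x + bar * (π x - π x * F x) := fun x => by
      rw [hhx, hμF x]; ring
    rw [Finset.sum_congr rfl fun x _ => e1 x, Finset.sum_add_distrib, ← Finset.mul_sum]
    have e2 : ∑ x, (π x - π x * F x) = 0 := by
      rw [Finset.sum_sub_distrib, hπsum, hsumF]; ring
    rw [e2]
    ring
  -- Cauchy–Schwarz
  have hCS : A^2 ≤ (∑ x, π x * (F x - 1)^2) * (∑ x, π x * h x ^ 2) := by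
    have hcs := Finset.sum_mul_sq_le_sq_mul_sq Finset.univ
      (fun x => Real.sqrt (π x) * (1 - F x)) (fun x => Real.sqrt (π x) * h x)
    have e1 : ∀ x : Ω, (Real.sqrt (π x) * (1 - F x)) * (Real.sqrt (π x) * h x)
        = (π x * (1 - F x)) * h x := fun x => by
      have hss : Real.sqrt (π x) * Real.sqrt (π x) = π x :=
        Real.mul_self_sqrt (hπpos x).le
      rw [mul_mul_mul_comm, hss, ← mul_assoc]
    have e2 : ∀ x : Ω, (Real.sqrt (π x) * (1 - F x))^2 = π x * (F x - 1)^2 := fun x => by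
      rw [mul_pow, Real.sq_sqrt (hπpos x).le]; ring
    have e3 : ∀ x : Ω, (Real.sqrt (π x) * h x)^2 = π x * h x ^ 2 := fun x => by
      rw [mul_pow, Real.sq_sqrt (hπpos x).le]
    rw [Finset.sum_congr rfl fun x _ => e1 x, Finset.sum_congr rfl fun x _ => e2 x,
      Finset.sum_congr rfl fun x _ => e3 x] at hcs
    rw [hApair2]
    exact hcs
  -- Poincaré inequality applied to h
  have hpoin := te_poincare π p CMLSI hπpos hπsum hp hMLSI h hmean
  have hEpA : (1/2) * ∑ x, ∑ y, (h y - h x)^2 * (π x * p x y) = A := by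
    rw [hAdef]
    congr 1
    refine Finset.sum_congr rfl fun x _ => Finset.sum_congr rfl fun y _ => ?_
    rcases eq_or_ne x y with rfl | hxy
    · simp [hcdiag]
    · rw [hc, if_neg hxy, hhx y, hhx x]
      ring
  rw [hEpA] at hpoin
  have hVh0 : 0 ≤ ∑ x, π x * h x ^ 2 :=
    Finset.sum_nonneg fun x _ => mul_nonneg (hπpos x).le (sq_nonneg _)
  have hVarF0 : 0 ≤ ∑ x, π x * (F x - 1)^2 :=
    Finset.sum_nonneg fun x _ => mul_nonneg (hπpos x).le (sq_nonneg _)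
  -- final bound on A
  have hfinal : A ≤ 4 * CMLSI * M * KL := by
    rcases eq_or_lt_of_le hA0 with hA | hA
    · -- A = 0 forces μ = π
      have hzero : ∑ x, ∑ y, c x y * ((g y - g x) * (g y - g x)) = 0 := by
        rw [hAdef] at hA; linarith
      have hterm : ∀ a b : Ω, c a b * ((g b - g a) * (g b - g a)) = 0 := by
        intro a b
        have houter := (Finset.sum_eq_zero_iff_of_nonneg
          (fun a _ => Finset.sum_nonneg fun b _ =>
            mul_nonneg (hc0 a b) (mul_self_nonneg _))).1 hzero a (Finset.mem_univ a)
        exact (Finset.sum_eq_zero_iff_of_nonneg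
          (fun b _ => mul_nonneg (hc0 a b) (mul_self_nonneg _))).1 houter b
          (Finset.mem_univ b)
      have hμπ : ∀ x, μ x = π x := by
        intro x
        have hsz : ∑ y, c x y * (g y - g x) = 0 := Finset.sum_eq_zero fun y _ => by
          rcases mul_eq_zero.1 (hterm x y) with h0 | h0
          · rw [h0, zero_mul]
          · rw [mul_self_eq_zero.1 h0, mul_zero]
        have h1 := hg x
        rw [hsz] at h1
        linarith
      have hKL0 : KL = 0 := by
        rw [hKL]
        refine Finset.sum_eq_zero fun x _ => ?_
        have hf1 : F x = 1 := by
          rw [hFx, hμπ x, div_self (ne_of_gt (hπpos x))]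
        rw [hf1]
        simp
      rw [hKL0, ← hA, mul_zero]
    · have hchain : A * A ≤ (4 * CMLSI * M * KL) * A := by
        calc A*A = A^2 := (sq A).symm
        _ ≤ (∑ x, π x * (F x - 1)^2) * (∑ x, π x * h x ^ 2) := hCS
        _ ≤ (2*M*KL) * (∑ x, π x * h x ^ 2) :=
            mul_le_mul_of_nonneg_right hVarF hVh0
        _ ≤ (2*M*KL) * (2 * CMLSI * A) :=
            mul_le_mul_of_nonneg_left hpoin (le_trans hVarF0 hVarF)
        _ = (4 * CMLSI * M * KL) * A := by ring
      exact le_of_mul_le_mul_right hchain hA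
  -- the flux certificate and conclusion
  rw [hKLgoal]
  have hmem : A ∈ {v : ℝ | ∃ J : Ω → Ω → ℝ,
      (∀ x y, J x y = - J y x) ∧
      (∀ x y, c x y = 0 → J x y = 0) ∧
      (∀ x, (π x - μ x) + ∑ y, J x y = 0) ∧
      v = (1 / 2) * ∑ x, ∑ y, if 0 < c x y then J x y ^ 2 / c x y else 0} := by
    refine ⟨fun x y => c x y * (g y - g x), ?_, ?_, ?_, ?_⟩
    · intro x y
      show c x y * (g y - g x) = -(c y x * (g x - g y))
      rw [hcsym x y]; ring
    · intro x y h0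
      show c x y * (g y - g x) = 0
      rw [h0, zero_mul]
    · intro x
      show (π x - μ x) + ∑ y, c x y * (g y - g x) = 0
      rw [hg x]; ring
    · show A = (1 / 2) * ∑ x, ∑ y,
        if 0 < c x y then (c x y * (g y - g x)) ^ 2 / c x y else 0
      rw [hAdef]
      congr 1
      refine Finset.sum_congr rfl fun x _ => Finset.sum_congr rfl fun y _ => ?_
      rcases lt_or_ge 0 (c x y) with hpos | hle
      · rw [if_pos hpos, eq_div_iff (ne_of_gt hpos)]
        ring
      · have h0 : c x y = 0 := le_antisymm hle (hc0 x y)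
        rw [if_neg (by rw [h0]; exact lt_irrefl 0), h0, zero_mul]
  have hSnonneg : ∀ v ∈ {v : ℝ | ∃ J : Ω → Ω → ℝ,
      (∀ x y, J x y = - J y x) ∧
      (∀ x y, c x y = 0 → J x y = 0) ∧
      (∀ x, (π x - μ x) + ∑ y, J x y = 0) ∧
      v = (1 / 2) * ∑ x, ∑ y, if 0 < c x y then J x y ^ 2 / c x y else 0}, 0 ≤ v := by
    rintro v ⟨J, _, _, _, hveq⟩
    rw [hveq]
    refine mul_nonneg (by norm_num) (Finset.sum_nonneg fun x _ =>
      Finset.sum_nonneg fun y _ => ?_)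
    split
    · next hpos => positivity
    · exact le_refl 0
  have hInf0 : 0 ≤ sInf {v : ℝ | ∃ J : Ω → Ω → ℝ,
      (∀ x y, J x y = - J y x) ∧
      (∀ x y, c x y = 0 → J x y = 0) ∧
      (∀ x, (π x - μ x) + ∑ y, J x y = 0) ∧
      v = (1 / 2) * ∑ x, ∑ y, if 0 < c x y then J x y ^ 2 / c x y else 0} :=
    le_csInf ⟨A, hmem⟩ hSnonneg
  have hInfle : sInf {v : ℝ | ∃ J : Ω → Ω → ℝ,
      (∀ x y, J x y = - J y x) ∧
      (∀ x y, c x y = 0 → J x y = 0) ∧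
      (∀ x, (π x - μ x) + ∑ y, J x y = 0) ∧
      v = (1 / 2) * ∑ x, ∑ y, if 0 < c x y then J x y ^ 2 / c x y else 0} ≤ A :=
    csInf_le ⟨0, fun v hv => hSnonneg v hv⟩ hmem
  calc Wc2 c μ π ^ 2
      = sInf {v : ℝ | ∃ J : Ω → Ω → ℝ,
        (∀ x y, J x y = - J y x) ∧
        (∀ x y, c x y = 0 → J x y = 0) ∧
        (∀ x, (π x - μ x) + ∑ y, J x y = 0) ∧
        v = (1 / 2) * ∑ x, ∑ y, if 0 < c x y then J x y ^ 2 / c x y else 0} := by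
        rw [Wc2, Real.sq_sqrt hInf0]
  _ ≤ A := hInfle
  _ ≤ 4 * CMLSI * M * KL := hfinal
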